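/- In an n-dimensional (ε)-para Sasakian manifold, the Ricci tensor satisfies S(Y, φZ) = C¹₁(φR)(Y,Z) + ε(n−2)Φ(Y,Z) + ( 2η(Y)η(Z) − ε g(Y,Z) ) trace(φ), where C¹₁(φR) denotes the contraction of the (1,3)-tensor (X,Y,Z) ↦ φR(X,Y)Z over X. -/

import Mathlib

/-- In an n-dimensional (ε)-para Sasakian manifold,
`S(Y, φZ) = C¹₁(φR)(Y,Z) + ε(n−2)Φ(Y,Z) + (2η(Y)η(Z) − ε g(Y,Z)) trace(φ)`,
where `S`, `C¹₁(φR)` and `trace(φ)` are the contractions computed with a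
pseudo-orthonormal frame `e` with signs `εs`, and `Φ(X,Y) = g(φX,Y)`. -/
theorem epsPS_S_phi_identity {V : Type*} [AddCommGroup V] [Module ℝ V]
    (φ : V →ₗ[ℝ] V) (ξ : V) (η : V →ₗ[ℝ] ℝ) (g : LinearMap.BilinForm ℝ V)
    (ε : ℝ) (hε : ε = 1 ∨ ε = -1) (n : ℕ)
    (hsym : ∀ X Y, g X Y = g Y X)
    (hφ2 : ∀ X, φ (φ X) = X - η X • ξ)
    (hηξ : η ξ = 1) (hφξ : φ ξ = 0) (hηφ : ∀ X, η (φ X) = 0)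
    (hmetric : ∀ X Y, g (φ X) (φ Y) = g X Y - ε * η X * η Y)
    (hgξ : ∀ X, g X ξ = ε * η X)
    -- pseudo-orthonormal frame
    (e : Module.Basis (Fin n) ℝ V) (εs : Fin n → ℝ) (hεs : ∀ i, εs i = 1 ∨ εs i = -1)
    (hON : ∀ i j, g (e i) (e j) = if i = j then εs i else 0)
    (hcomplete : ∀ X : V, X = ∑ i, (εs i * g X (e i)) • e i)
    -- the curvature identity R(X,Y)φZ = φR(X,Y)Z + ... of an (ε)-para Sasakian manifold
    (R : V → V → V → V)
    (hRφ : ∀ X Y Z, R X Y (φ Z) = φ (R X Y Z)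
      + (ε * g (φ Y) Z) • X - (ε * g (φ X) Z) • Y
      - (2 * ε * g (φ Y) Z * η X) • ξ + (2 * ε * g (φ X) Z * η Y) • ξ
      - (ε * g Y Z) • φ X + (ε * g X Z) • φ Y
      + (2 * η Y * η Z) • φ X - (2 * η X * η Z) • φ Y) :
    ∀ Y Z, (∑ i, εs i * g (R (e i) Y (φ Z)) (e i)) =
      (∑ i, εs i * g (φ (R (e i) Y Z)) (e i))
      + ε * ((n : ℝ) - 2) * g (φ Y) Z
      + (2 * η Y * η Z - ε * g Y Z) * (∑ i, εs i * g (φ (e i)) (e i)) := by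

  intro Y Z
  have hε2 : ε * ε = 1 := by rcases hε with h | h <;> rw [h] <;> ring
  have hgξ' : ∀ X, g ξ X = ε * η X := fun X => by rw [hsym]; exact hgξ X
  -- general contraction lemma
  have hcontr : ∀ (f : V →ₗ[ℝ] ℝ) (A : V), f A = ∑ i, εs i * g A (e i) * f (e i) := by
    intro f A
    conv_lhs => rw [hcomplete A]
    rw [map_sum]
    refine Finset.sum_congr rfl fun i _ => ?_
    rw [map_smul, smul_eq_mul, mul_assoc]
  have A1 : (∑ i, εs i * g (e i) (e i)) = (n : ℝ) := by
    have : ∀ i, εs i * g (e i) (e i) = 1 := by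
      intro i; rw [hON i i, if_pos rfl]
      rcases hεs i with h | h <;> rw [h] <;> ring
    simp [this]
  have A2 : ∀ A, (∑ i, εs i * g A (e i) * g (φ (e i)) Z) = g (φ A) Z := by
    intro A
    have := hcontr (((LinearMap.flip g) Z).comp φ) A
    simpa using this.symm
  have A6 : (∑ i, εs i * g Z (e i) * g (φ Y) (e i)) = g (φ Y) Z := by
    have := hcontr (g (φ Y)) Z
    rw [← this, hsym]
  have Aη : ∀ (f : V →ₗ[ℝ] ℝ), (∑ i, εs i * η (e i) * f (e i)) = ε * f ξ := by
    intro f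
    have h1 := hcontr f ξ
    have h2 : ∀ i, εs i * g ξ (e i) * f (e i) = ε * (εs i * η (e i) * f (e i)) := by
      intro i; rw [hgξ']; ring
    rw [Finset.sum_congr rfl (fun i _ => h2 i), ← Finset.mul_sum] at h1
    have := congrArg (fun t => ε * t) h1
    simp only [← mul_assoc, hε2, one_mul] at this
    exact this.symm
  have A3 : (∑ i, εs i * η (e i) * η (e i)) = ε := by
    rw [Aη η, hηξ, mul_one]
  have A4 : (∑ i, εs i * η (e i) * g (φ (e i)) Z) = 0 := by
    have := Aη (((LinearMap.flip g) Z).comp φ)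
    simpa [hφξ] using this
  have A8 : (∑ i, εs i * η (e i) * g (φ Y) (e i)) = 0 := by
    rw [Aη (g (φ Y)), hgξ, hηφ]; ring
  have expand : ∀ i, εs i * g (R (e i) Y (φ Z)) (e i) =
      εs i * g (φ (R (e i) Y Z)) (e i)
      + (ε * g (φ Y) Z) * (εs i * g (e i) (e i))
      - ε * (εs i * g Y (e i) * g (φ (e i)) Z)
      - (2 * ε * g (φ Y) Z * ε) * (εs i * η (e i) * η (e i))
      + (2 * ε * η Y * ε) * (εs i * η (e i) * g (φ (e i)) Z)
      - (ε * g Y Z) * (εs i * g (φ (e i)) (e i))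
      + ε * (εs i * g Z (e i) * g (φ Y) (e i))
      + (2 * η Y * η Z) * (εs i * g (φ (e i)) (e i))
      - (2 * η Z) * (εs i * η (e i) * g (φ Y) (e i)) := by
    intro i
    rw [hRφ]
    simp only [map_add, map_sub, map_smul, LinearMap.add_apply, LinearMap.sub_apply,
      LinearMap.smul_apply, smul_eq_mul, hgξ', hsym (e i) Y, hsym (e i) Z]
    ring
  rw [Finset.sum_congr rfl (fun i _ => expand i)]
  simp only [Finset.sum_add_distrib, Finset.sum_sub_distrib, ← Finset.mul_sum]
  rw [A1, A2 Y, A3, A4, A6, A8]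
  linear_combination (-(2 * ε * g (φ Y) Z)) * hε2
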